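/- Let g(x) = -(η/h(0)) · h(2x/w) where h is the standard bump function on ℝ^d. Then for λ > 0, ∫_{[-w/2,w/2]^d} (e^{-λ g(x)} - 1) dx ≥ (w/2)^d (e^{c λ η} - 1), where c = h((1/2,...,1/2))/h(0). -/

import Mathlib

open Real MeasureTheory

lemma glue_mono : Monotone expNegInvGlue := by
  intro a b hab
  rcases le_or_gt a 0 with ha | ha
  · rw [expNegInvGlue.zero_of_nonpos ha]; exact expNegInvGlue.nonneg b
  · have hb : 0 < b := ha.trans_le hab
    simp only [expNegInvGlue, if_neg (not_le.2 ha), if_neg (not_le.2 hb)]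
    exact exp_le_exp.2 (neg_le_neg (inv_anti₀ ha hab))

/-- For `g(x) = -(η/h(0)) · h(2x/w)` with `h` the standard bump function and `λ > 0`,
`∫_{[-w/2,w/2]^d} (e^{-λ g} - 1) ≥ (w/2)^d (e^{cλη} - 1)` with
`c = h((1/2,…,1/2)) / h(0)`. -/
theorem stmt_4 (d : ℕ) (η w lam : ℝ) (hη : 0 < η) (hw : 0 < w) (hlam : 0 < lam)
    (h g : EuclideanSpace ℝ (Fin d) → ℝ)
    (hh : ∀ x, h x = if ‖x‖ < 1 then Real.exp (-1 / (1 - ‖x‖ ^ 2)) else 0)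
    (hg : ∀ x, g x = -(η / h 0) * h ((2 / w) • x)) :
    (w / 2) ^ d * (Real.exp ((h (WithLp.toLp 2 (fun _ => (1 : ℝ) / 2)) / h 0) * lam * η) - 1) ≤
      ∫ x in (Set.univ.pi fun _ : Fin d => Set.Icc (-(w / 2)) (w / 2)),
        (Real.exp (-(lam * g (WithLp.toLp 2 x))) - 1) := by
  have hglue : ∀ x : EuclideanSpace ℝ (Fin d), h x = expNegInvGlue (1 - ‖x‖ ^ 2) := by
    intro x
    rw [hh, expNegInvGlue]
    rcases lt_or_ge ‖x‖ 1 with hx | hx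
    · rw [if_pos hx, if_neg (by nlinarith [norm_nonneg x])]
      congr 1
      rw [neg_div, one_div]
    · rw [if_neg (not_lt.2 hx), if_pos (by nlinarith [norm_nonneg x])]
  have hcont : Continuous h := by
    have : h = fun x => expNegInvGlue (1 - ‖x‖ ^ 2) := funext hglue
    rw [this]
    exact expNegInvGlue.contDiff (n := 1) |>.continuous.comp
      (continuous_const.sub ((continuous_norm).pow 2))
  have h0pos : 0 < h 0 := by
    rw [hh]
    simp only [norm_zero]
    norm_num [exp_pos]
  have hnonneg : ∀ x, 0 ≤ h x := fun x => (hglue x) ▸ expNegInvGlue.nonneg _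
  have hmono : ∀ x y : EuclideanSpace ℝ (Fin d), ‖x‖ ≤ ‖y‖ → h y ≤ h x := by
    intro x y hxy
    rw [hglue, hglue]
    exact glue_mono (by nlinarith [norm_nonneg x])
  set p : EuclideanSpace ℝ (Fin d) := WithLp.toLp 2 (fun _ => (1 : ℝ) / 2) with hp
  -- the big cube and the small cube
  set Q : Set (EuclideanSpace ℝ (Fin d)) :=
    {x | x.ofLp ∈ Set.univ.pi fun _ : Fin d => Set.Icc (-(w / 2)) (w / 2)} with hQ
  set S : Set (EuclideanSpace ℝ (Fin d)) :=
    {x | x.ofLp ∈ Set.univ.pi fun _ : Fin d => Set.Icc (-(w / 4)) (w / 4)} with hS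
  have hSQ : S ⊆ Q := by
    refine fun x hx => Set.pi_mono (fun i _ => Set.Icc_subset_Icc (by linarith) (by linarith)) hx
  have hQmeas : MeasurableSet Q :=
    (MeasurableSet.univ_pi fun _ => measurableSet_Icc).preimage (MeasurableEquiv.toLp 2 (Fin d → ℝ)).symm.measurable
  have hSmeas : MeasurableSet S :=
    (MeasurableSet.univ_pi fun _ => measurableSet_Icc).preimage (MeasurableEquiv.toLp 2 (Fin d → ℝ)).symm.measurable
  -- integrand nonneg and continuous
  set f : EuclideanSpace ℝ (Fin d) → ℝ := fun x => Real.exp (-(lam * g x)) - 1 with hf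
  have hgle : ∀ x, g x ≤ 0 := by
    intro x
    rw [hg]
    have := hnonneg ((2 / w) • x)
    have : 0 ≤ (η / h 0) * h ((2 / w) • x) := by positivity
    linarith
  have hfnonneg : ∀ x, 0 ≤ f x := by
    intro x
    have hx : (0:ℝ) ≤ -(lam * g x) := by nlinarith [hgle x]
    have := Real.one_le_exp hx
    simp only [hf]
    linarith
  have hfcont : Continuous f := by
    apply Continuous.sub _ continuous_const
    apply Real.continuous_exp.comp
    apply Continuous.neg
    apply continuous_const.mul
    have : Continuous fun x : EuclideanSpace ℝ (Fin d) => g x := by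
      have : g = fun x => -(η / h 0) * h ((2 / w) • x) := funext hg
      rw [this]
      exact continuous_const.mul (hcont.comp (continuous_const_smul _))
    exact this
  -- key pointwise bound on S
  have hnormp : ‖p‖ = Real.sqrt (∑ _i : Fin d, ((1:ℝ)/2) ^ 2) := by
    rw [EuclideanSpace.norm_eq]
    congr 1
    refine Finset.sum_congr rfl fun i _ => ?_
    rw [hp]
    norm_num
  have key : ∀ x ∈ S, Real.exp ((h p / h 0) * lam * η) - 1 ≤ f x := by
    intro x hx
    have hxbound : ∀ i, |x i| ≤ w / 4 := by
      intro i
      have := hx i (Set.mem_univ i)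
      rw [abs_le]; exact ⟨this.1, this.2⟩
    have hnx : ‖(2 / w) • x‖ ≤ ‖p‖ := by
      rw [EuclideanSpace.norm_eq, hnormp]
      apply Real.sqrt_le_sqrt
      apply Finset.sum_le_sum
      intro i _
      have hxi := hxbound i
      have hb : ‖((2 / w) • x) i‖ ≤ 1 / 2 := by
        have he : ((2 / w) • x) i = (2 / w) * x i := rfl
        rw [he, Real.norm_eq_abs, abs_mul, abs_of_pos (by positivity : (0:ℝ) < 2 / w)]
        have h1 : (2 / w) * |x i| ≤ (2 / w) * (w / 4) :=
          mul_le_mul_of_nonneg_left hxi (by positivity)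
        have h2 : (2 / w) * (w / 4) = 1 / 2 := by field_simp; ring
        linarith
      calc ‖((2 / w) • x) i‖ ^ 2 ≤ (1/2) ^ 2 :=
            pow_le_pow_left₀ (norm_nonneg _) hb 2
        _ = ((1:ℝ)/2) ^ 2 := by norm_num
    have hhp : h p ≤ h ((2 / w) • x) := hmono _ _ hnx
    have harg : (h p / h 0) * lam * η ≤ -(lam * g x) := by
      rw [hg]
      have : -(lam * (-(η / h 0) * h ((2 / w) • x))) = lam * η * (h ((2 / w) • x) / h 0) := by
        field_simp
      rw [this]
      have h1 : h p / h 0 ≤ h ((2 / w) • x) / h 0 := by gcongr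
      calc h p / h 0 * lam * η = lam * η * (h p / h 0) := by ring
        _ ≤ lam * η * (h ((2 / w) • x) / h 0) :=
            mul_le_mul_of_nonneg_left h1 (by positivity)
    simp only [hf]
    have := Real.exp_le_exp.2 harg
    linarith
  -- volume of S
  have hvolS : volume S = ENNReal.ofReal ((w / 2) ^ d) := by
    have hmp := EuclideanSpace.volume_preserving_symm_measurableEquiv_toLp (Fin d)
    have : S = (MeasurableEquiv.toLp 2 (Fin d → ℝ)).symm ⁻¹'
        (Set.univ.pi fun _ : Fin d => Set.Icc (-(w / 4)) (w / 4)) := rfl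
    rw [this, hmp.measure_preimage
      ((MeasurableSet.univ_pi fun _ => measurableSet_Icc).nullMeasurableSet)]
    rw [volume_pi_pi]
    simp only [Real.volume_Icc]
    rw [Finset.prod_const, ← ENNReal.ofReal_pow (by linarith)]
    congr 2
    · ring
    · simp
  -- integrability
  have hQcompact : IsCompact Q :=
    (PiLp.homeomorph (p := 2) (β := fun _ : Fin d => ℝ)).isCompact_preimage.2 (isCompact_univ_pi fun _ => isCompact_Icc)
  have hintQ : IntegrableOn f Q := hfcont.continuousOn.integrableOn_compact hQcompact
  have hintS : IntegrableOn f S := hintQ.mono_set hSQ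
  -- chain of inequalities
  have step1 : (Real.exp ((h p / h 0) * lam * η) - 1) * (volume S).toReal
      ≤ ∫ x in S, f x :=
    by have := setIntegral_ge_of_const_le hSmeas (by rw [hvolS]; exact ENNReal.ofReal_ne_top) key hintS
       rw [smul_eq_mul, mul_comm] at this; exact this
  have step2 : ∫ x in S, f x ≤ ∫ x in Q, f x := by
    apply setIntegral_mono_set hintQ
    · exact Filter.Eventually.of_forall hfnonneg
    · exact Filter.Eventually.of_forall hSQ
  have hvt : (volume S).toReal = (w / 2) ^ d := by
    rw [hvolS, ENNReal.toReal_ofReal (by positivity)]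
  have hIeq := (PiLp.volume_preserving_toLp (Fin d)).setIntegral_preimage_emb
      (MeasurableEquiv.toLp 2 (Fin d → ℝ)).measurableEmbedding f Q
  calc (w / 2) ^ d * (Real.exp ((h p / h 0) * lam * η) - 1)
      = (Real.exp ((h p / h 0) * lam * η) - 1) * (volume S).toReal := by rw [hvt]; ring
    _ ≤ ∫ x in S, f x := step1
    _ ≤ ∫ x in Q, f x := step2
    _ = ∫ x in (Set.univ.pi fun _ : Fin d => Set.Icc (-(w / 2)) (w / 2)),
        (Real.exp (-(lam * g (WithLp.toLp 2 x))) - 1) := hIeq.symm
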